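/- arXiv:2402.16690 — 4 statements merged into one kernel-verified Lean document; each statement's English description precedes it below -/
import Mathlib

section
/- Let α ∈ (0,1), let N ≥ 1, and let μ₁,…,μ_N be Borel probability measures on ℝ, each with a finite first moment and a continuous, strictly increasing cumulative distribution function. Let ω₁,…,ω_N be positive reals with Σⱼ ωⱼ = 1 and let μ = Σⱼ ωⱼ • μⱼ be the mixture measure. Set q = VaR_α(μ) and αⱼ = μⱼ((q,∞)) for each j (so each αⱼ ∈ (0,1)). Then CVaR_α(μ) = (1/α) · Σⱼ ωⱼ · αⱼ · CVaR_{αⱼ}(μⱼ). -/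
open MeasureTheory Set Filter Topology

/-- Value-at-risk of a Borel probability measure `μ` on `ℝ` at level `α`:
`VaR_α(μ) = sInf { z | μ((-∞, z]) ≥ 1 - α }`. -/
noncomputable def VaR (μ : Measure ℝ) (α : ℝ) : ℝ :=
  sInf {z : ℝ | 1 - α ≤ (μ (Iic z)).toReal}

/-- Conditional value-at-risk via the Rockafellar–Uryasev formula:
`CVaR_α(μ) = ⨅ z, z + (1/α) ∫ max(y - z, 0) dμ(y)`. -/
noncomputable def CVaR (μ : Measure ℝ) (α : ℝ) : ℝ :=
  ⨅ z : ℝ, z + (1 / α) * ∫ y, max (y - z) 0 ∂μ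

lemma cvar_aux_pointwise (q z y : ℝ) :
    max (y - q) 0 + (q - z) * (Ioi q).indicator (fun _ => (1:ℝ)) y ≤ max (y - z) 0 := by
  by_cases hy : y ∈ Ioi q
  · rw [indicator_of_mem hy, mul_one,
      max_eq_left (by simp only [mem_Ioi] at hy; linarith : (0:ℝ) ≤ y - q)]
    have := le_max_left (y - z) (0:ℝ)
    linarith
  · rw [indicator_of_notMem hy, mul_zero, add_zero]
    simp only [mem_Ioi, not_lt] at hy
    rw [max_eq_right (by linarith : y - q ≤ 0)]
    exact le_max_right _ _

lemma prob_Ioi_toReal (ν : Measure ℝ) [IsProbabilityMeasure ν] (q : ℝ) :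
    (ν (Ioi q)).toReal = 1 - (ν (Iic q)).toReal := by
  have h : ν (Ioi q) = 1 - ν (Iic q) := by
    rw [← compl_Iic]; exact prob_compl_eq_one_sub measurableSet_Iic
  rw [h, ENNReal.toReal_sub_of_le prob_le_one ENNReal.one_ne_top, ENNReal.toReal_one]

/-- Key lemma: the infimum in the Rockafellar–Uryasev formula is attained at any `q` whose
upper-tail probability is exactly `β`. -/
lemma cvar_eq_of_tail (ν : Measure ℝ) [IsFiniteMeasure ν] (hInt : Integrable id ν)
    (q β : ℝ) (hβpos : 0 < β) (hβ : β = (ν (Ioi q)).toReal) :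
    CVaR ν β = q + (1/β) * ∫ y, max (y - q) 0 ∂ν := by
  have hint : ∀ z : ℝ, Integrable (fun y => max (y - z) 0) ν := fun z => by
    have : Integrable (fun y : ℝ => y - z) ν := hInt.sub (integrable_const z)
    simpa [max_def] using this.pos_part
  have hind : Integrable ((Ioi q).indicator (fun _ => (1:ℝ))) ν :=
    (integrable_const (1:ℝ)).indicator measurableSet_Ioi
  have key : ∀ z : ℝ, q + (1/β) * ∫ y, max (y - q) 0 ∂ν
      ≤ z + (1/β) * ∫ y, max (y - z) 0 ∂ν := by
    intro z
    have h1 : ∫ y, (max (y - q) 0 + (q - z) * (Ioi q).indicator (fun _ => (1:ℝ)) y) ∂ν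
        ≤ ∫ y, max (y - z) 0 ∂ν :=
      integral_mono ((hint q).add (hind.const_mul _)) (hint z)
        (fun y => cvar_aux_pointwise q z y)
    rw [integral_add (hint q) (hind.const_mul _), integral_const_mul,
      integral_indicator_const (1:ℝ) measurableSet_Ioi, smul_eq_mul, mul_one, measureReal_def, ← hβ] at h1
    have h2 : (1/β) * (∫ y, max (y - q) 0 ∂ν + (q - z) * β)
        ≤ (1/β) * ∫ y, max (y - z) 0 ∂ν :=
      mul_le_mul_of_nonneg_left h1 (by positivity)
    have h3 : (1/β) * ((q - z) * β) = q - z := by field_simp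
    rw [mul_add, h3] at h2
    linarith
  refine le_antisymm ?_ (le_ciInf key)
  exact ciInf_le ⟨q + (1/β) * ∫ y, max (y - q) 0 ∂ν, by rintro x ⟨z, rfl⟩; exact key z⟩ q

/-- CVaR of a mixture is the weighted combination of component CVaRs at the
tail-probability levels `αⱼ = μⱼ((q, ∞))`, `q = VaR_α(μ)`. -/
theorem cvar_mixture (α : ℝ) (hα : α ∈ Set.Ioo (0 : ℝ) 1)
    (N : ℕ) (hN : 1 ≤ N)
    (μs : Fin N → Measure ℝ) [∀ j, IsProbabilityMeasure (μs j)]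
    (hmom : ∀ j, Integrable id (μs j))
    (hcont : ∀ j, Continuous fun z => ((μs j) (Iic z)).toReal)
    (hmono : ∀ j, StrictMono fun z => ((μs j) (Iic z)).toReal)
    (ω : Fin N → ℝ) (hω : ∀ j, 0 < ω j) (hsum : ∑ j, ω j = 1)
    (μ : Measure ℝ) (hμ : μ = ∑ j, ENNReal.ofReal (ω j) • μs j)
    (q : ℝ) (hq : q = VaR μ α)
    (a : Fin N → ℝ) (ha : ∀ j, a j = ((μs j) (Ioi q)).toReal) :
    CVaR μ α = (1 / α) * ∑ j, ω j * a j * CVaR (μs j) (a j) := by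
  haveI : Nonempty (Fin N) := ⟨⟨0, hN⟩⟩
  have hμ_apply : ∀ s : Set ℝ, μ s = ∑ j, ENNReal.ofReal (ω j) * μs j s := by
    intro s
    rw [hμ, Measure.finset_sum_apply]
    simp [Measure.smul_apply, smul_eq_mul]
  have hμ_toReal : ∀ s : Set ℝ, (μ s).toReal = ∑ j, ω j * (μs j s).toReal := by
    intro s
    rw [hμ_apply, ENNReal.toReal_sum (fun j _ =>
      ENNReal.mul_ne_top ENNReal.ofReal_ne_top (measure_ne_top _ _))]
    exact Finset.sum_congr rfl fun j _ => by
      rw [ENNReal.toReal_mul, ENNReal.toReal_ofReal (hω j).le]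
  haveI hprob : IsProbabilityMeasure μ := by
    constructor
    rw [hμ_apply]
    simp only [measure_univ, mul_one]
    rw [← ENNReal.ofReal_sum_of_nonneg (fun j _ => (hω j).le), hsum, ENNReal.ofReal_one]
  -- the mixture CDF
  set F : ℝ → ℝ := fun z => (μ (Iic z)).toReal with hF
  have hFsum : ∀ z, F z = ∑ j, ω j * (μs j (Iic z)).toReal := fun z => hμ_toReal _
  have hFcont : Continuous F := by
    have : Continuous fun z => ∑ j, ω j * (μs j (Iic z)).toReal :=
      continuous_finset_sum _ fun j _ => continuous_const.mul (hcont j)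
    exact this.congr fun z => (hFsum z).symm
  have hFmono : StrictMono F := by
    intro x y hxy
    rw [hFsum, hFsum]
    exact Finset.sum_lt_sum_of_nonempty Finset.univ_nonempty
      fun j _ => mul_lt_mul_of_pos_left (hmono j hxy) (hω j)
  -- CDF limits
  have htop : Tendsto F atTop (𝓝 1) := by
    have h1 : Tendsto (fun x => μ (Iic x)) atTop (𝓝 (μ univ)) := tendsto_measure_Iic_atTop μ
    rw [measure_univ] at h1
    have := (ENNReal.tendsto_toReal ENNReal.one_ne_top).comp h1
    rw [ENNReal.toReal_one] at this; exact this
  have hbot : Tendsto F atBot (𝓝 0) := by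
    have h1 : Tendsto (μ ∘ Iic) atBot (𝓝 (μ (⋂ x : ℝ, Iic x))) :=
      tendsto_measure_iInter_atBot (fun x => measurableSet_Iic.nullMeasurableSet)
        (fun x y hxy => Iic_subset_Iic.2 hxy) ⟨0, measure_ne_top _ _⟩
    have hempty : (⋂ x : ℝ, Iic x) = ∅ := by
      ext y; simp only [mem_iInter, mem_Iic, mem_empty_iff_false, iff_false, not_forall, not_le]
      exact ⟨y - 1, by linarith⟩
    rw [hempty, measure_empty] at h1
    have := (ENNReal.tendsto_toReal (by simp : (0:ENNReal) ≠ ⊤)).comp h1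
    rw [ENNReal.toReal_zero] at this; exact this
  -- VaR characterization: F q = 1 - α
  have hFq : F q = 1 - α := by
    obtain ⟨A, hA⟩ := ((tendsto_order.1 hbot).2 (1 - α) (by linarith [hα.2])).exists
    obtain ⟨B, hB⟩ := ((tendsto_order.1 htop).1 (1 - α) (by linarith [hα.1])).exists
    have hAB : A ≤ B := by
      by_contra h
      exact absurd (hFmono.monotone (le_of_not_ge h)) (by intro h'; linarith)
    obtain ⟨q0, _, hq0⟩ := intermediate_value_Icc hAB hFcont.continuousOn ⟨hA.le, hB.le⟩
    have hset : {z : ℝ | 1 - α ≤ (μ (Iic z)).toReal} = Ici q0 := by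
      ext z
      simp only [mem_setOf_eq, mem_Ici, ← hq0]
      exact ⟨fun h => (hFmono.le_iff_le).1 h, fun h => hFmono.monotone h⟩
    have : q = q0 := by rw [hq, VaR, hset, csInf_Ici]
    rw [this, hq0]
  have hIoiμ : (μ (Ioi q)).toReal = α := by
    rw [prob_Ioi_toReal μ q]
    change 1 - F q = α
    rw [hFq]; ring
  -- positivity of the a j
  have hFj_lt_one : ∀ j (z : ℝ), ((μs j) (Iic z)).toReal < 1 := by
    intro j z
    have h1 : ((μs j) (Iic z)).toReal < ((μs j) (Iic (z+1))).toReal := hmono j (by linarith)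
    have h2 : ((μs j) (Iic (z+1))).toReal ≤ 1 := by
      have := (ENNReal.toReal_le_toReal (measure_ne_top _ _) ENNReal.one_ne_top).2
        (prob_le_one (μ := μs j) (s := Iic (z+1)))
      simpa using this
    linarith
  have haj_pos : ∀ j, 0 < a j := by
    intro j
    rw [ha j, prob_Ioi_toReal]
    linarith [hFj_lt_one j q]
  -- integrability of the mixture
  have hInt_mix : Integrable id μ := by
    rw [hμ, integrable_finset_sum_measure]
    exact fun j _ => (hmom j).smul_measure ENNReal.ofReal_ne_top
  -- CVaR formulas via the key lemma
  have hCVaRμ : CVaR μ α = q + (1/α) * ∫ y, max (y - q) 0 ∂μ :=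
    cvar_eq_of_tail μ hInt_mix q α hα.1 hIoiμ.symm
  have hCVaRj : ∀ j, CVaR (μs j) (a j)
      = q + (1/(a j)) * ∫ y, max (y - q) 0 ∂(μs j) :=
    fun j => cvar_eq_of_tail (μs j) (hmom j) q (a j) (haj_pos j) (ha j)
  -- split the integral over the mixture
  have hintj : ∀ j, Integrable (fun y => max (y - q) 0) (μs j) := fun j => by
    have : Integrable (fun y : ℝ => y - q) (μs j) := (hmom j).sub (integrable_const q)
    simpa [max_def] using this.pos_part
  have hsplit : ∫ y, max (y - q) 0 ∂μ = ∑ j, ω j * ∫ y, max (y - q) 0 ∂(μs j) := by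
    rw [hμ, integral_finset_sum_measure
      (fun j _ => (hintj j).smul_measure ENNReal.ofReal_ne_top)]
    exact Finset.sum_congr rfl fun j _ => by
      rw [integral_smul_measure, ENNReal.toReal_ofReal (hω j).le, smul_eq_mul]
  -- ∑ ω j * a j = α
  have hωa : ∑ j, ω j * a j = α := by
    have : ∑ j, ω j * a j = ∑ j, ω j * ((μs j) (Ioi q)).toReal :=
      Finset.sum_congr rfl fun j _ => by rw [ha j]
    rw [this, ← hμ_toReal (Ioi q), hIoiμ]
  -- put everything together
  have hsum2 : ∑ j, ω j * a j * CVaR (μs j) (a j)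
      = q * α + ∑ j, ω j * ∫ y, max (y - q) 0 ∂(μs j) := by
    rw [← hωa, Finset.mul_sum, ← Finset.sum_add_distrib]
    refine Finset.sum_congr rfl fun j _ => ?_
    rw [hCVaRj j]
    have hja : a j ≠ 0 := (haj_pos j).ne'
    field_simp
  rw [hCVaRμ, hsplit, hsum2]
  have hα0 : α ≠ 0 := hα.1.ne'
  field_simp
end

section
/- Let μ be a Borel probability measure on ℝ with a finite first moment and a continuous cumulative distribution function, and let α ∈ (0,1). Define Q : ℝ → ℝ by Q(z) = z + (1/α) · ∫ max(y - z, 0) dμ(y). Then Q attains its global minimum at q = VaR_α(μ); that is, Q(q) ≤ Q(z) for every z ∈ ℝ, and consequently CVaR_α(μ) = Q(q) = VaR_α(μ) + (1/α) · ∫ max(y - VaR_α(μ), 0) dμ(y). -/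
open MeasureTheory Set

private lemma compl_toReal (μ : Measure ℝ) [IsProbabilityMeasure μ] {s : Set ℝ}
    (hs : MeasurableSet s) : (μ sᶜ).toReal = 1 - (μ s).toReal := by
  rw [prob_compl_eq_one_sub hs, ENNReal.toReal_sub_of_le prob_le_one ENNReal.one_ne_top,
    ENNReal.toReal_one]

/-- The Rockafellar–Uryasev objective `Q` attains its global minimum at
`q = VaR_α(μ)`, so `CVaR_α(μ) = Q(q) = VaR_α(μ) + (1/α) ∫ max(y - VaR_α(μ), 0) dμ`. -/
theorem rockafellar_uryasev_minimizer (μ : Measure ℝ) [IsProbabilityMeasure μ]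
    (hmom : Integrable id μ)
    (hcont : Continuous fun z => (μ (Iic z)).toReal)
    (α : ℝ) (hα : α ∈ Set.Ioo (0 : ℝ) 1)
    (Q : ℝ → ℝ) (hQ : ∀ z, Q z = z + (1 / α) * ∫ y, max (y - z) 0 ∂μ)
    (q : ℝ) (hq : q = VaR μ α) :
    (∀ z : ℝ, Q q ≤ Q z) ∧
      CVaR μ α = VaR μ α + (1 / α) * ∫ y, max (y - VaR μ α) 0 ∂μ := by
  obtain ⟨hα0, hα1⟩ := hα
  set F : ℝ → ℝ := fun z => (μ (Iic z)).toReal with hF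
  set S : Set ℝ := {z : ℝ | 1 - α ≤ F z} with hS
  -- integrability of the positive-part integrands
  have hint : ∀ z : ℝ, Integrable (fun y => max (y - z) 0) μ := by
    intro z
    have : Integrable (fun y : ℝ => y - z) μ := hmom.sub (integrable_const z)
    exact this.pos_part
  -- S is nonempty
  have htop : Filter.Tendsto F Filter.atTop (nhds 1) := by
    have h1 : Filter.Tendsto (fun x : ℝ => μ (Iic x)) Filter.atTop (nhds (μ univ)) :=
      tendsto_measure_Iic_atTop μ
    have h2 := (ENNReal.tendsto_toReal (by simp : μ univ ≠ ⊤)).comp h1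
    simpa [measure_univ, Function.comp_def] using h2
  have hne : S.Nonempty := by
    have : ∀ᶠ z in Filter.atTop, 1 - α ≤ F z :=
      htop.eventually (eventually_ge_nhds (by linarith))
    obtain ⟨z, hz⟩ := this.exists
    exact ⟨z, hz⟩
  -- S is bounded below
  have hGtop : Filter.Tendsto (fun x : ℝ => (μ (Ici x)).toReal) Filter.atBot (nhds 1) := by
    have h1 : Filter.Tendsto (fun x : ℝ => μ (Ici x)) Filter.atBot (nhds (μ univ)) :=
      tendsto_measure_Ici_atBot μ
    have h2 := (ENNReal.tendsto_toReal (by simp : μ univ ≠ ⊤)).comp h1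
    simpa [measure_univ, Function.comp_def] using h2
  have hbdd : BddBelow S := by
    have hev : ∀ᶠ x in Filter.atBot, α < (μ (Ici x)).toReal :=
      hGtop.eventually (eventually_gt_nhds (by linarith))
    obtain ⟨a, ha⟩ := Filter.eventually_atBot.mp hev
    refine ⟨a - 1, fun z hz => ?_⟩
    by_contra h
    push_neg at h
    have h1 : α < (μ (Ici (z + 1))).toReal := ha (z + 1) (by linarith)
    have h2 : (μ (Ici (z + 1))).toReal ≤ (μ (Ioi z)).toReal :=
      ENNReal.toReal_mono (measure_ne_top μ _) (measure_mono (fun y hy => by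
        simp only [mem_Ici] at hy; simp only [mem_Ioi]; linarith))
    have h3 : (μ (Ioi z)).toReal = 1 - F z := by
      have := compl_toReal μ (measurableSet_Iic (a := z))
      simpa [compl_Iic] using this
    have hzS : 1 - α ≤ F z := hz
    rw [h3] at h2
    linarith
  -- q belongs to S (F q ≥ 1 - α)
  have hclosed : IsClosed S := isClosed_Ici.preimage hcont
  have hqS : q ∈ S := by
    rw [hq]
    exact hclosed.csInf_mem hne hbdd
  have hFq_ge : 1 - α ≤ F q := hqS
  -- F q ≤ 1 - α by left-continuity
  have hleft : Filter.Tendsto F (nhdsWithin q (Iio q)) (nhds (F q)) :=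
    (hcont.tendsto q).mono_left nhdsWithin_le_nhds
  have hFq_le : F q ≤ 1 - α := by
    refine le_of_tendsto hleft ?_
    filter_upwards [self_mem_nhdsWithin] with t ht
    simp only [mem_Iio] at ht
    by_contra h
    push_neg at h
    have : t ∈ S := le_of_lt h
    have : q ≤ t := hq ▸ csInf_le hbdd this
    linarith
  have hFq : F q = 1 - α := le_antisymm hFq_le hFq_ge
  -- measure of Iio q
  have hIio : (μ (Iio q)).toReal = 1 - α := by
    refine le_antisymm ?_ ?_
    · calc (μ (Iio q)).toReal ≤ F q :=
            ENNReal.toReal_mono (measure_ne_top μ _) (measure_mono Iio_subset_Iic_self)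
        _ = 1 - α := hFq
    · rw [← hFq]
      refine le_of_tendsto hleft ?_
      filter_upwards [self_mem_nhdsWithin] with t ht
      simp only [mem_Iio] at ht
      exact ENNReal.toReal_mono (measure_ne_top μ _)
        (measure_mono (fun y hy => lt_of_le_of_lt hy ht))
  have hIoi : (μ (Ioi q)).toReal = α := by
    have := compl_toReal μ (measurableSet_Iic (a := q))
    rw [compl_Iic] at this
    rw [this]
    have : F q = 1 - α := hFq
    simp only [hF] at this
    linarith
  have hIci : (μ (Ici q)).toReal = α := by
    have := compl_toReal μ (measurableSet_Iio (a := q))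
    rw [compl_Iio] at this
    rw [this, hIio]
    ring
  -- the main minimization claim
  have hmin : ∀ z : ℝ, Q q ≤ Q z := by
    intro z
    rw [hQ, hQ]
    rcases le_total q z with hzq | hzq
    · -- q ≤ z
      have key : (∫ y, max (y - q) 0 ∂μ) - (∫ y, max (y - z) 0 ∂μ) ≤ α * (z - q) := by
        rw [← integral_sub (hint q) (hint z)]
        have hb : ∀ y : ℝ, max (y - q) 0 - max (y - z) 0 ≤
            (Ioi q).indicator (fun _ => z - q) y := by
          intro y
          rcases le_or_gt y q with h | h
          · rw [Set.indicator_of_notMem (by simpa using not_lt.mpr h)]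
            have h1 : max (y - q) 0 = 0 := max_eq_right (by linarith)
            have h2 : max (y - z) 0 = 0 := max_eq_right (by linarith)
            simp [h1, h2]
          · rw [Set.indicator_of_mem (by simpa using h)]
            rcases le_total y z with h2 | h2
            · have hz2 : max (y - z) 0 = 0 := max_eq_right (by linarith)
              have hq2 : max (y - q) 0 = y - q := max_eq_left (by linarith)
              rw [hz2, hq2]; linarith
            · have hz2 : max (y - z) 0 = y - z := max_eq_left (by linarith)
              have hq2 : max (y - q) 0 = y - q := max_eq_left (by linarith)
              rw [hz2, hq2]; linarith
        have hi : Integrable ((Ioi q).indicator (fun _ : ℝ => z - q)) μ :=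
          (integrable_const (z - q)).indicator measurableSet_Ioi
        calc ∫ y, (max (y - q) 0 - max (y - z) 0) ∂μ
            ≤ ∫ y, (Ioi q).indicator (fun _ => z - q) y ∂μ :=
              integral_mono ((hint q).sub (hint z)) hi hb
          _ = (μ (Ioi q)).toReal • (z - q) := integral_indicator_const _ measurableSet_Ioi
          _ = α * (z - q) := by rw [hIoi]; simp [smul_eq_mul]
      have h1 : (1 / α) * ((∫ y, max (y - q) 0 ∂μ) - (∫ y, max (y - z) 0 ∂μ)) ≤
          (1 / α) * (α * (z - q)) := by
        apply mul_le_mul_of_nonneg_left key (by positivity)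
      have h2 : (1 / α) * (α * (z - q)) = z - q := by field_simp
      rw [mul_sub, h2] at h1
      linarith
    · -- z ≤ q
      have key : α * (q - z) ≤ (∫ y, max (y - z) 0 ∂μ) - (∫ y, max (y - q) 0 ∂μ) := by
        rw [← integral_sub (hint z) (hint q)]
        have hb : ∀ y : ℝ, (Ici q).indicator (fun _ => q - z) y ≤
            max (y - z) 0 - max (y - q) 0 := by
          intro y
          rcases lt_or_ge y q with h | h
          · rw [Set.indicator_of_notMem (by simpa using h)]
            have h1 : max (y - q) 0 = 0 := max_eq_right (by linarith)
            rw [h1]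
            simp only [sub_zero]
            exact le_max_right _ _
          · rw [Set.indicator_of_mem (by simpa using h)]
            have h1 : max (y - q) 0 = y - q := max_eq_left (by linarith)
            have h2 : max (y - z) 0 = y - z := max_eq_left (by linarith)
            rw [h1, h2]; linarith
        have hi : Integrable ((Ici q).indicator (fun _ : ℝ => q - z)) μ :=
          (integrable_const (q - z)).indicator measurableSet_Ici
        calc α * (q - z) = (μ (Ici q)).toReal • (q - z) := by rw [hIci]; simp [smul_eq_mul]
          _ = ∫ y, (Ici q).indicator (fun _ => q - z) y ∂μ :=
              (integral_indicator_const _ measurableSet_Ici).symm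
          _ ≤ ∫ y, (max (y - z) 0 - max (y - q) 0) ∂μ :=
              integral_mono hi ((hint z).sub (hint q)) hb
      have h1 : (1 / α) * (α * (q - z)) ≤
          (1 / α) * ((∫ y, max (y - z) 0 ∂μ) - (∫ y, max (y - q) 0 ∂μ)) := by
        apply mul_le_mul_of_nonneg_left key (by positivity)
      have h2 : (1 / α) * (α * (q - z)) = q - z := by field_simp
      rw [h2, mul_sub] at h1
      linarith
  refine ⟨hmin, ?_⟩
  have hCVaR : CVaR μ α = Q q := by
    have heq : (fun z : ℝ => z + (1 / α) * ∫ y, max (y - z) 0 ∂μ) = Q :=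
      funext fun z => (hQ z).symm
    rw [CVaR, heq]
    refine le_antisymm (ciInf_le ⟨Q q, ?_⟩ q) (le_ciInf hmin)
    rintro x ⟨z, rfl⟩
    exact hmin z
  rw [hCVaR, hQ, hq]
end

section
/- Let m ∈ ℝ, σ > 0, and α ∈ (0,1). Let Φ denote the cumulative distribution function and φ(x) = exp(−x²/2)/√(2π) the density of the standard real Gaussian. Let z* ∈ ℝ be the (unique) real number with Φ(z*) = 1 − α. Then ⨅ (z : ℝ), z + (1/α) · ∫ max(y − z, 0) d(gaussianReal m (σ²))(y) = m + σ · φ(z*) / α. That is, CVaR_α of the Gaussian distribution N(m, σ²) equals m + σ·φ(Φ⁻¹(1−α))/α. -/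
open MeasureTheory ProbabilityTheory Set Filter Real
open scoped ENNReal NNReal


noncomputable def phi0 (x : ℝ) : ℝ := Real.exp (-(x ^ 2) / 2) / Real.sqrt (2 * Real.pi)
noncomputable def Phi0 (x : ℝ) : ℝ := ((gaussianReal 0 1) (Iic x)).toReal

lemma phi0_nonneg (x : ℝ) : 0 ≤ phi0 x := by rw [phi0]; positivity

lemma pdf_eq (x : ℝ) : gaussianPDFReal 0 1 x = phi0 x := by
  simp [gaussianPDFReal, phi0, div_eq_inv_mul]

lemma Phi0_eq (x : ℝ) : Phi0 x = ∫ y in Iic x, phi0 y := by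
  rw [Phi0, gaussianReal_apply_eq_integral 0 one_ne_zero, ENNReal.toReal_ofReal]
  · simp_rw [pdf_eq]
  · exact setIntegral_nonneg measurableSet_Iic fun y _ => gaussianPDFReal_nonneg _ _ _

lemma integrable_phi0 : Integrable phi0 := by
  have := integrable_gaussianPDFReal 0 1
  simpa [funext pdf_eq] using this

lemma continuous_phi0 : Continuous phi0 := by
  unfold phi0; fun_prop

lemma hasDerivAt_phi0 (x : ℝ) : HasDerivAt phi0 (-x * phi0 x) x := by
  have h : HasDerivAt (fun x : ℝ => Real.exp (-(x ^ 2) / 2) / Real.sqrt (2 * Real.pi))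
      (Real.exp (-(x ^ 2) / 2) * (-x) / Real.sqrt (2 * Real.pi)) x := by
    have h1 : HasDerivAt (fun x : ℝ => -(x ^ 2) / 2) (-x) x := by
      have := ((hasDerivAt_pow 2 x).neg).div_const 2
      simpa using this.congr_deriv (by ring)
    exact ((Real.hasDerivAt_exp _).comp x h1).div_const _
  have h2 := h.congr_deriv (g' := -x * phi0 x) (by simp only [phi0]; ring)
  exact h2

lemma hasDerivAt_Phi0 (x : ℝ) : HasDerivAt Phi0 (phi0 x) x := by
  have key : ∀ y : ℝ, Phi0 y = Phi0 0 + ∫ t in (0:ℝ)..y, phi0 t := by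
    intro y
    rw [Phi0_eq, Phi0_eq]
    rw [← intervalIntegral.integral_Iic_sub_Iic integrable_phi0.integrableOn
      integrable_phi0.integrableOn]
    ring
  have h : HasDerivAt (fun y => Phi0 0 + ∫ t in (0:ℝ)..y, phi0 t) (phi0 x) x := by
    refine HasDerivAt.const_add _ ?_
    exact intervalIntegral.integral_hasDerivAt_right
      (integrable_phi0.intervalIntegrable) (continuous_phi0.stronglyMeasurableAtFilter _ _)
      continuous_phi0.continuousAt
  rw [funext key]; exact h

lemma integrable_id_mul_phi0 : Integrable (fun x : ℝ => x * phi0 x) := by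
  have h := (integrable_mul_exp_neg_mul_sq (by norm_num : (0:ℝ) < 1/2)).div_const
    (Real.sqrt (2 * Real.pi))
  have he : (fun x : ℝ => x * Real.exp (-(1/2) * x ^ 2) / Real.sqrt (2 * Real.pi))
      = fun x => x * phi0 x := by
    funext x
    rw [phi0, show -(1/2) * x ^ 2 = -(x ^ 2) / 2 by ring]
    ring
  rwa [he] at h

lemma tendsto_phi0 : Tendsto phi0 atTop (nhds 0) := by
  have h1 : Tendsto (fun x : ℝ => -(x ^ 2) / 2) atTop atBot := by
    apply Filter.Tendsto.atBot_div_const (by norm_num)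
    exact tendsto_neg_atBot_iff.mpr (tendsto_pow_atTop (by norm_num))
  have h2 := (Real.tendsto_exp_atBot.comp h1).div_const (Real.sqrt (2 * Real.pi))
  rw [zero_div] at h2
  exact h2

lemma tendsto_Phi0 : Tendsto Phi0 atTop (nhds 1) := by
  have h := tendsto_measure_Iic_atTop (μ := gaussianReal 0 1)
  have h2 : Tendsto (fun x => ((gaussianReal 0 1) (Iic x)).toReal) atTop
      (nhds ((gaussianReal 0 1) univ).toReal) :=
    (ENNReal.tendsto_toReal (measure_ne_top _ _)).comp h
  unfold Phi0; simpa using h2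

lemma integral_max_std (t : ℝ) :
    ∫ x, max (x - t) 0 ∂(gaussianReal 0 1) = phi0 t + t * Phi0 t - t := by
  -- reduce to a Lebesgue integral against the density
  have h1 : ∫ x, max (x - t) 0 ∂(gaussianReal 0 1)
      = ∫ x, phi0 x * max (x - t) 0 := by
    rw [gaussianReal_of_var_ne_zero 0 one_ne_zero]
    have : (gaussianPDF 0 1) = fun x => ((gaussianPDFReal 0 1 x).toNNReal : ℝ≥0∞) := rfl
    rw [this, integral_withDensity_eq_integral_smul
      ((measurable_gaussianPDFReal 0 1).real_toNNReal)]
    congr 1; funext x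
    rw [NNReal.smul_def, smul_eq_mul, Real.coe_toNNReal _ (gaussianPDFReal_nonneg 0 1 x), pdf_eq]
  have h2 : (fun x => phi0 x * max (x - t) 0)
      = Set.indicator (Ioi t) (fun x => (x - t) * phi0 x) := by
    funext x
    by_cases hx : t < x
    · rw [Set.indicator_of_mem (Set.mem_Ioi.mpr hx), max_eq_left (by linarith), mul_comm]
    · rw [Set.indicator_of_notMem (by simpa using hx), max_eq_right (by push_neg at hx; linarith), mul_zero]
  have hint : Integrable (fun x : ℝ => (x - t) * phi0 x) := by
    have := integrable_id_mul_phi0.sub (integrable_phi0.const_mul t)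
    simpa [sub_mul, Pi.sub_def] using this
  rw [h1, h2, integral_indicator measurableSet_Ioi]
  -- FTC on `Ioi t`
  have hderiv : ∀ x ∈ Ici t, HasDerivAt (fun x => -phi0 x - t * Phi0 x) ((x - t) * phi0 x) x := by
    intro x _
    have := (hasDerivAt_phi0 x).neg.sub ((hasDerivAt_Phi0 x).const_mul t)
    exact this.congr_deriv (by ring)
  have htend : Tendsto (fun x => -phi0 x - t * Phi0 x) atTop (nhds (-t)) := by
    have := (tendsto_phi0.neg).sub (tendsto_Phi0.const_mul t)
    simpa using this
  rw [MeasureTheory.integral_Ioi_of_hasDerivAt_of_tendsto' hderiv hint.integrableOn htend]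
  ring

lemma Phi0_mono : Monotone Phi0 := fun x y hxy =>
  ENNReal.toReal_mono (measure_ne_top _ _) (measure_mono (Iic_subset_Iic.mpr hxy))

lemma G_min (α : ℝ) (hα : α ∈ Set.Ioo (0:ℝ) 1) (zstar : ℝ) (hz : Phi0 zstar = 1 - α)
    (t : ℝ) :
    phi0 zstar ≤ α * t + (phi0 t + t * Phi0 t - t) := by
  set G : ℝ → ℝ := fun t => α * t + (phi0 t + t * Phi0 t - t) with hG
  have hderiv : ∀ x : ℝ, HasDerivAt G (α + Phi0 x - 1) x := by
    intro x
    have h := ((hasDerivAt_id x).const_mul α).add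
      (((hasDerivAt_phi0 x).add ((hasDerivAt_id x).mul (hasDerivAt_Phi0 x))).sub
        (hasDerivAt_id x))
    simp only [id_eq] at h
    exact h.congr_deriv (by ring)
  have hdiff : Differentiable ℝ G := fun x => (hderiv x).differentiableAt
  have hderiv' : ∀ x, deriv G x = α + Phi0 x - 1 := fun x => (hderiv x).deriv
  have hGz : G zstar = phi0 zstar := by
    simp only [hG, hz]; ring
  rw [← hGz]
  rcases le_total zstar t with h | h
  · have hmono : MonotoneOn G (Ici zstar) := by
      apply monotoneOn_of_deriv_nonneg (convex_Ici _) hdiff.continuous.continuousOn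
        (hdiff.differentiableOn)
      intro x hx
      rw [hderiv']
      have : Phi0 zstar ≤ Phi0 x := Phi0_mono (le_of_lt (by simpa [interior_Ici] using hx))
      rw [hz] at this; linarith
    exact hmono self_mem_Ici h h
  · have hanti : AntitoneOn G (Iic zstar) := by
      apply antitoneOn_of_deriv_nonpos (convex_Iic _) hdiff.continuous.continuousOn
        (hdiff.differentiableOn)
      intro x hx
      rw [hderiv']
      have : Phi0 x ≤ Phi0 zstar := Phi0_mono (le_of_lt (by simpa [interior_Iic] using hx))
      rw [hz] at this; linarith
    exact hanti h self_mem_Iic h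


/-- Closed-form CVaR of a Gaussian `N(m, σ²)`:
`CVaR_α = m + σ · φ(Φ⁻¹(1 - α)) / α`, where `Φ` and `φ` are the CDF and the
density of the standard Gaussian, and CVaR is defined by the
Rockafellar–Uryasev formula. -/
theorem cvar_gaussian (m σ α : ℝ) (hσ : 0 < σ) (hα : α ∈ Set.Ioo (0 : ℝ) 1)
    (Phi : ℝ → ℝ) (hPhi : ∀ x, Phi x = ((gaussianReal 0 1) (Iic x)).toReal)
    (phi : ℝ → ℝ)
    (hphi : ∀ x, phi x = Real.exp (-(x ^ 2) / 2) / Real.sqrt (2 * Real.pi))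
    (zstar : ℝ) (hz : Phi zstar = 1 - α) :
    (⨅ z : ℝ, z + (1 / α) * ∫ y, max (y - z) 0
        ∂(gaussianReal m ⟨σ ^ 2, sq_nonneg σ⟩))
      = m + σ * phi zstar / α := by
  obtain ⟨hα0, hα1⟩ := hα
  have hσne : σ ≠ 0 := hσ.ne'
  have hPhi0 : Phi0 zstar = 1 - α := by unfold Phi0; rw [← hPhi zstar]; exact hz
  have hphi0 : phi zstar = phi0 zstar := by rw [hphi, phi0]
  have hmap : gaussianReal m ⟨σ ^ 2, sq_nonneg σ⟩
      = Measure.map (fun x => σ * x + m) (gaussianReal 0 1) := by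
    have h1 : (fun x : ℝ => σ * x + m) = (fun y => y + m) ∘ (fun x => σ * x) := rfl
    rw [h1, ← Measure.map_map (measurable_add_const m) (measurable_const_mul σ)]
    rw [show (fun x : ℝ => σ * x) = (σ * ·) from rfl, gaussianReal_map_const_mul,
      show (fun y : ℝ => y + m) = (· + m) from rfl, gaussianReal_map_add_const]
    congr 1 <;> simp <;> rfl
  have hint : ∀ z : ℝ, ∫ y, max (y - z) 0 ∂(gaussianReal m ⟨σ ^ 2, sq_nonneg σ⟩)
      = σ * (phi0 ((z - m)/σ) + ((z - m)/σ) * Phi0 ((z - m)/σ) - (z - m)/σ) := by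
    intro z
    set t := (z - m)/σ with ht
    rw [hmap, integral_map (by fun_prop) (Continuous.aestronglyMeasurable (by fun_prop))]
    have heq : ∀ x : ℝ, max (σ * x + m - z) 0 = σ * max (x - t) 0 := by
      intro x
      rw [mul_max_of_nonneg _ _ hσ.le, mul_zero]
      congr 1
      rw [ht]
      field_simp
      ring
    simp_rw [heq]
    rw [MeasureTheory.integral_const_mul, integral_max_std]
  have hobj : ∀ z : ℝ, z + (1 / α) * ∫ y, max (y - z) 0
        ∂(gaussianReal m ⟨σ ^ 2, sq_nonneg σ⟩)
      = m + (σ / α) * (α * ((z - m)/σ)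
          + (phi0 ((z - m)/σ) + ((z - m)/σ) * Phi0 ((z - m)/σ) - (z - m)/σ)) := by
    intro z
    rw [hint z]
    field_simp
    ring
  have hlow : ∀ z : ℝ, m + σ * phi zstar / α ≤ z + (1 / α) * ∫ y, max (y - z) 0
        ∂(gaussianReal m ⟨σ ^ 2, sq_nonneg σ⟩) := by
    intro z
    rw [hobj z, hphi0]
    have h := G_min α ⟨hα0, hα1⟩ zstar hPhi0 ((z - m)/σ)
    have hσα : (0:ℝ) ≤ σ / α := by positivity
    have h2 := mul_le_mul_of_nonneg_left h hσα
    have h3 : σ * phi0 zstar / α = (σ / α) * phi0 zstar := by ring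
    linarith
  apply le_antisymm
  · have hval : (m + σ * zstar) + (1 / α) * ∫ y, max (y - (m + σ * zstar)) 0
          ∂(gaussianReal m ⟨σ ^ 2, sq_nonneg σ⟩) = m + σ * phi zstar / α := by
      rw [hobj, hphi0]
      have ht : ((m + σ * zstar) - m)/σ = zstar := by field_simp; ring
      rw [ht, hPhi0]
      field_simp
      ring
    refine le_trans (ciInf_le ?_ (m + σ * zstar)) (le_of_eq hval)
    exact ⟨m + σ * phi zstar / α, by rintro x ⟨z, rfl⟩; exact hlow z⟩
  · exact le_ciInf hlow
end

section
/- Let α ∈ (0,1), let N ≥ 1, and for each j let mⱼ ∈ ℝ and σⱼ > 0, and let ω₁,…,ω_N be positive reals with Σⱼ ωⱼ = 1. Let μ = Σⱼ ωⱼ • gaussianReal mⱼ (σⱼ²) be the Gaussian mixture, let q = VaR_α(μ), and let αⱼ = μⱼ((q,∞)) = 1 − Φ((q − mⱼ)/σⱼ) be the tail probability of the j-th component beyond q, where Φ and φ are the cumulative distribution function and density of the standard real Gaussian. Then CVaR_α(μ) = (1/α) · Σⱼ ωⱼ · ( αⱼ · mⱼ + σⱼ · φ((q − mⱼ)/σⱼ)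 ). -/
open MeasureTheory ProbabilityTheory Set

open Real Filter Topology
open scoped ENNReal NNReal

noncomputable def stdPdf (x : ℝ) : ℝ := Real.exp (-(x^2)/2) / Real.sqrt (2*Real.pi)

lemma stdPdf_pos (x : ℝ) : 0 < stdPdf x := by
  unfold stdPdf
  positivity

lemma gaussianPDFReal_std : gaussianPDFReal 0 1 = stdPdf := by
  ext x
  simp [gaussianPDFReal, stdPdf, div_eq_inv_mul, mul_one, sub_zero]

lemma gaussianReal_std_eq : gaussianReal 0 1 =
    volume.withDensity (fun x => ((stdPdf x).toNNReal : ℝ≥0∞)) := by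
  rw [gaussianReal_of_var_ne_zero _ one_ne_zero]
  congr 1
  ext x
  rw [gaussianPDF, gaussianPDFReal_std]
  rfl

lemma stdPdf_measurable' : Measurable stdPdf := by
  have := measurable_gaussianPDFReal 0 1
  rwa [gaussianPDFReal_std] at this

lemma stdPdf_measurable : Measurable (fun x => (stdPdf x).toNNReal) :=
  stdPdf_measurable'.real_toNNReal

lemma integral_gaussian_std (g : ℝ → ℝ) :
    ∫ x, g x ∂(gaussianReal 0 1) = ∫ x, stdPdf x * g x := by
  rw [gaussianReal_std_eq, integral_withDensity_eq_integral_smul stdPdf_measurable]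
  congr 1; ext x
  simp [NNReal.smul_def, Real.coe_toNNReal _ (stdPdf_pos x).le]

lemma integrable_gaussian_std_iff (g : ℝ → ℝ) :
    Integrable g (gaussianReal 0 1) ↔ Integrable (fun x => stdPdf x * g x) volume := by
  rw [gaussianReal_std_eq, integrable_withDensity_iff_integrable_smul stdPdf_measurable]
  constructor <;> intro h <;>
    · refine h.congr (ae_of_all _ fun x => ?_)
      simp [NNReal.smul_def, Real.coe_toNNReal _ (stdPdf_pos x).le]

lemma integrable_stdPdf : Integrable stdPdf := by
  have := integrable_gaussianPDFReal 0 1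
  rwa [gaussianPDFReal_std] at this

lemma gaussian_std_apply_toReal {s : Set ℝ} (hs : MeasurableSet s) :
    ((gaussianReal 0 1) s).toReal = ∫ x in s, stdPdf x := by
  rw [gaussianReal_apply_eq_integral _ one_ne_zero s, gaussianPDFReal_std,
    ENNReal.toReal_ofReal]
  exact setIntegral_nonneg hs fun x _ => (stdPdf_pos x).le

lemma hasDerivAt_neg_stdPdf (x : ℝ) :
    HasDerivAt (fun y => -stdPdf y) (x * stdPdf x) x := by
  have h1 : HasDerivAt (fun y : ℝ => -(y^2)/2) (-x) x := by
    have := ((hasDerivAt_pow 2 x).neg).div_const 2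
    refine this.congr_deriv ?_
    ring
  have h2 : HasDerivAt (fun y : ℝ => Real.exp (-(y^2)/2)) (Real.exp (-(x^2)/2) * (-x)) x :=
    h1.exp
  have h3 := (h2.div_const (Real.sqrt (2*Real.pi))).neg
  refine h3.congr_deriv ?_
  unfold stdPdf
  field_simp

lemma tendsto_neg_stdPdf : Tendsto (fun x => -stdPdf x) atTop (nhds 0) := by
  rw [show (0:ℝ) = -(0 / Real.sqrt (2*Real.pi)) by simp]
  refine Tendsto.neg (Tendsto.div_const ?_ _)
  refine Real.tendsto_exp_atBot.comp ?_
  have : Tendsto (fun x : ℝ => x^2/2) atTop atTop :=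
    (tendsto_pow_atTop two_ne_zero).atTop_div_const two_pos
  simpa [neg_div, Function.comp_def] using tendsto_neg_atTop_atBot.comp this

lemma integrable_mul_stdPdf : Integrable (fun x => x * stdPdf x) := by
  have h := integrable_mul_exp_neg_mul_sq (b := 1/2) (by norm_num)
  have h2 := h.div_const (Real.sqrt (2*Real.pi))
  refine h2.congr (ae_of_all _ fun x => ?_)
  show x * rexp (-(1/2) * x ^ 2) / √(2 * π) = x * stdPdf x
  rw [show -(1/2:ℝ)*x^2 = -(x^2)/2 by ring, mul_div_assoc]
  rfl

lemma integral_Ioi_mul_stdPdf (t : ℝ) : ∫ x in Ioi t, x * stdPdf x = stdPdf t := by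
  have := integral_Ioi_of_hasDerivAt_of_tendsto'
    (f := fun y => -stdPdf y) (f' := fun x => x * stdPdf x) (a := t)
    (fun x _ => hasDerivAt_neg_stdPdf x) integrable_mul_stdPdf.integrableOn
    tendsto_neg_stdPdf
  simpa using this

noncomputable def stdCdf (t : ℝ) : ℝ := ((gaussianReal 0 1) (Iic t)).toReal

lemma gaussian_std_Ioi_toReal (t : ℝ) :
    ((gaussianReal 0 1) (Ioi t)).toReal = 1 - stdCdf t := by
  have h : (gaussianReal 0 1) (Ioi t) = 1 - (gaussianReal 0 1) (Iic t) := by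
    rw [← compl_Iic]
    exact prob_compl_eq_one_sub measurableSet_Iic
  rw [h, ENNReal.toReal_sub_of_le prob_le_one ENNReal.one_ne_top]
  rfl

lemma max_eq_indicator (t : ℝ) (x : ℝ) :
    stdPdf x * max (x - t) 0 = (Ioi t).indicator (fun x => stdPdf x * (x - t)) x := by
  by_cases h : t < x
  · rw [indicator_of_mem (mem_Ioi.mpr h), max_eq_left (by linarith)]
  · rw [indicator_of_notMem (by simpa using h), max_eq_right (by push_neg at h; linarith), mul_zero]

lemma integrableOn_stdPdf_shift (t : ℝ) :
    IntegrableOn (fun x => stdPdf x * (x - t)) (Ioi t) := by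
  have h1 : IntegrableOn (fun x => x * stdPdf x - t * stdPdf x) (Ioi t) :=
    (integrable_mul_stdPdf.sub (integrable_stdPdf.const_mul t)).integrableOn
  exact h1.congr_fun (fun x _ => by ring) measurableSet_Ioi

lemma integrable_gaussian_max (t : ℝ) :
    Integrable (fun x => max (x - t) 0) (gaussianReal 0 1) := by
  rw [integrable_gaussian_std_iff]
  have : Integrable ((Ioi t).indicator (fun x => stdPdf x * (x - t))) := by
    rw [integrable_indicator_iff measurableSet_Ioi]
    exact integrableOn_stdPdf_shift t
  exact this.congr (ae_of_all _ fun x => (max_eq_indicator t x).symm)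

lemma integral_gaussian_max (t : ℝ) :
    ∫ x, max (x - t) 0 ∂(gaussianReal 0 1) = stdPdf t - t * (1 - stdCdf t) := by
  rw [integral_gaussian_std]
  rw [show (fun x => stdPdf x * max (x - t) 0)
      = (Ioi t).indicator (fun x => stdPdf x * (x - t)) from funext (max_eq_indicator t)]
  rw [integral_indicator measurableSet_Ioi]
  have h1 : ∫ x in Ioi t, stdPdf x * (x - t)
      = ∫ x in Ioi t, (x * stdPdf x - t * stdPdf x) :=
    setIntegral_congr_fun measurableSet_Ioi (fun x _ => by ring)
  rw [h1, integral_sub integrable_mul_stdPdf.integrableOn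
    (integrable_stdPdf.const_mul t).integrableOn, integral_Ioi_mul_stdPdf,
    integral_const_mul, ← gaussian_std_apply_toReal measurableSet_Ioi,
    gaussian_std_Ioi_toReal]

section comp
variable {m σ q : ℝ} (hσ : 0 < σ)

lemma gaussian_eq_map (hσ : 0 < σ) :
    gaussianReal m ⟨σ^2, sq_nonneg σ⟩ = (gaussianReal 0 1).map (fun x => σ * x + m) := by
  have h1 : (gaussianReal 0 1).map (σ * ·) = gaussianReal 0 ⟨σ^2, sq_nonneg σ⟩ := by
    rw [gaussianReal_map_const_mul σ]
    norm_num
    rfl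
  have h2 : ((gaussianReal 0 1).map (σ * ·)).map (· + m)
      = gaussianReal m ⟨σ^2, sq_nonneg σ⟩ := by
    rw [h1]; erw [gaussianReal_map_add_const m, zero_add]
  rw [← h2, Measure.map_map (measurable_id'.add_const m) (measurable_id'.const_mul σ)]
  rfl

lemma comp_preimage (hσ : 0 < σ) :
    (fun x => σ * x + m) ⁻¹' (Ioi q) = Ioi ((q - m)/σ) := by
  ext x
  simp only [mem_preimage, mem_Ioi]
  rw [div_lt_iff₀ hσ]
  constructor <;> intro h <;> nlinarith [mul_comm σ x]

lemma gaussian_tail (hσ : 0 < σ) :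
    ((gaussianReal m ⟨σ^2, sq_nonneg σ⟩) (Ioi q)).toReal = 1 - stdCdf ((q - m)/σ) := by
  rw [gaussian_eq_map hσ, Measure.map_apply (by fun_prop) measurableSet_Ioi,
    comp_preimage hσ, gaussian_std_Ioi_toReal]

lemma comp_max (hσ : 0 < σ) (x : ℝ) :
    max (σ * x + m - q) 0 = σ * max (x - (q - m)/σ) 0 := by
  rw [mul_max_of_nonneg _ _ hσ.le, mul_zero]
  congr 1
  field_simp
  ring

lemma gaussian_integral_max (hσ : 0 < σ) :
    ∫ y, max (y - q) 0 ∂(gaussianReal m ⟨σ^2, sq_nonneg σ⟩)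
      = σ * stdPdf ((q - m)/σ) + (m - q) * (1 - stdCdf ((q - m)/σ)) := by
  set t := (q - m)/σ with ht
  rw [gaussian_eq_map hσ, integral_map (by fun_prop)
    (by exact (continuous_id.sub continuous_const).max continuous_const |>.aestronglyMeasurable)]
  have heq : ∀ x, max ((σ * x + m) - q) 0 = σ * max (x - t) 0 := fun x => comp_max hσ x
  rw [show (∫ x, max (σ * x + m - q) 0 ∂(gaussianReal 0 1))
      = ∫ x, σ * max (x - t) 0 ∂(gaussianReal 0 1) from
    integral_congr_ae (ae_of_all _ fun x => heq x)]
  rw [integral_const_mul, integral_gaussian_max]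
  have hst : σ * t = q - m := by rw [ht]; field_simp
  rw [mul_sub, ← mul_assoc, hst]
  ring

lemma gaussian_integrable_max (hσ : 0 < σ) :
    Integrable (fun y => max (y - q) 0) (gaussianReal m ⟨σ^2, sq_nonneg σ⟩) := by
  set t := (q - m)/σ
  rw [gaussian_eq_map hσ, integrable_map_measure
    (by exact (continuous_id.sub continuous_const).max continuous_const
      |>.aestronglyMeasurable) (by fun_prop)]
  have : Integrable (fun x => σ * max (x - t) 0) (gaussianReal 0 1) :=
    (integrable_gaussian_max t).const_mul σ
  exact this.congr (ae_of_all _ fun x => (comp_max hσ x).symm)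

end comp

lemma cdf_VaR (μ : Measure ℝ) [IsProbabilityMeasure μ] {α : ℝ} (hα : α ∈ Set.Ioo (0:ℝ) 1)
    (hatom : μ {VaR μ α} = 0) :
    (μ (Iic (VaR μ α))).toReal = 1 - α := by
  set F := cdf μ with hF
  set S := {z : ℝ | 1 - α ≤ (μ (Iic z)).toReal} with hS
  have hSF : S = {z : ℝ | 1 - α ≤ F z} := by
    ext z; simp [hS, hF, cdf_eq_real, measureReal_def]
  have hq : VaR μ α = sInf S := rfl
  set q := VaR μ α with hqdef
  -- S is nonempty
  have hne : S.Nonempty := by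
    have h1 : ∀ᶠ z in atTop, 1 - α ≤ F z :=
      Filter.Tendsto.eventually_const_le (by linarith [hα.1]) (tendsto_cdf_atTop μ)
    obtain ⟨z, hz⟩ := h1.exists
    exact ⟨z, by rw [hSF]; exact hz⟩
  -- S is bounded below
  have hbdd : BddBelow S := by
    have h0 : ∀ᶠ z in atBot, F z < 1 - α :=
      Filter.Tendsto.eventually_lt_const (by linarith [hα.2]) (tendsto_cdf_atBot μ)
    obtain ⟨z₀, hz₀⟩ := h0.exists
    refine ⟨z₀, fun s hs => ?_⟩
    by_contra h
    push_neg at h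
    rw [hSF] at hs
    exact absurd (le_trans hs ((cdf μ).mono h.le)) (not_le.mpr hz₀)
  -- every z > q is in S
  have hgt : ∀ z, q < z → 1 - α ≤ F z := by
    intro z hz
    obtain ⟨s, hsS, hsz⟩ := (csInf_lt_iff hbdd hne).mp (hq ▸ hz)
    rw [hSF] at hsS
    exact le_trans hsS ((cdf μ).mono hsz.le)
  -- every z < q is not in S
  have hlt : ∀ z, z < q → F z < 1 - α := by
    intro z hz
    by_contra h
    push_neg at h
    have : z ∈ S := by rw [hSF]; exact h
    exact absurd (csInf_le hbdd this) (not_le.mpr (hq ▸ hz))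
  -- F q ≥ 1 - α by right continuity
  have hge : 1 - α ≤ F q := by
    have hc : ContinuousWithinAt F (Ioi q) q :=
      ((cdf μ).right_continuous q).mono Ioi_subset_Ici_self
    refine ge_of_tendsto (hc.tendsto) ?_
    filter_upwards [self_mem_nhdsWithin] with z hz
    exact hgt z hz
  -- F q ≤ 1 - α by left limit and no atom
  have hle : F q ≤ 1 - α := by
    have hll : Function.leftLim F q = F q := by
      have h1 : (cdf μ).measure {q} = μ {q} := by rw [measure_cdf]
      have h2 : ENNReal.ofReal (F q - Function.leftLim F q) = 0 := by
        rw [← (cdf μ).measure_singleton, h1, hatom]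
      have h3 : F q - Function.leftLim F q ≤ 0 := by
        by_contra h
        push_neg at h
        exact absurd h2 (by simp [ENNReal.ofReal_eq_zero]; linarith)
      have h4 : Function.leftLim F q ≤ F q := (cdf μ).mono.leftLim_le le_rfl
      linarith
    rw [← hll]
    have htd : Tendsto F (nhdsWithin q (Iio q)) (nhds (Function.leftLim F q)) :=
      (cdf μ).mono.tendsto_leftLim q
    refine le_of_tendsto htd ?_
    filter_upwards [self_mem_nhdsWithin] with z hz
    exact (hlt z hz).le
  have := le_antisymm hle hge
  rw [← measureReal_def, ← cdf_eq_real, ← hF, this]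

section mix
variable {N : ℕ} (ω : Fin N → ℝ) (ν : Fin N → Measure ℝ)

lemma mix_apply (hω : ∀ j, 0 < ω j) [∀ j, IsProbabilityMeasure (ν j)] (s : Set ℝ) :
    (((∑ j, ENNReal.ofReal (ω j) • ν j) : Measure ℝ) s).toReal
      = ∑ j, ω j * ((ν j) s).toReal := by
  rw [Measure.finset_sum_apply]
  rw [ENNReal.toReal_sum]
  · refine Finset.sum_congr rfl fun j _ => ?_
    rw [Measure.smul_apply, smul_eq_mul, ENNReal.toReal_mul,
      ENNReal.toReal_ofReal (hω j).le]
  · intro j _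
    rw [Measure.smul_apply, smul_eq_mul]
    exact ENNReal.mul_ne_top ENNReal.ofReal_ne_top (measure_ne_top _ _)

lemma mix_prob (hω : ∀ j, 0 < ω j) (hsum : ∑ j, ω j = 1)
    [∀ j, IsProbabilityMeasure (ν j)] :
    IsProbabilityMeasure ((∑ j, ENNReal.ofReal (ω j) • ν j) : Measure ℝ) := by
  constructor
  have h := mix_apply ω ν hω univ
  simp only [measure_univ, ENNReal.toReal_one, mul_one, hsum] at h
  have hfin : (((∑ j, ENNReal.ofReal (ω j) • ν j) : Measure ℝ) univ) ≠ ⊤ := by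
    rw [Measure.finset_sum_apply]
    exact ENNReal.sum_ne_top.mpr fun j _ => by
      rw [Measure.smul_apply, smul_eq_mul]
      exact ENNReal.mul_ne_top ENNReal.ofReal_ne_top (measure_ne_top _ _)
  rw [← ENNReal.ofReal_toReal hfin, h]
  simp

lemma mix_integrable {f : ℝ → ℝ} (hf : ∀ j, Integrable f (ν j)) :
    Integrable f ((∑ j, ENNReal.ofReal (ω j) • ν j) : Measure ℝ) := by
  refine integrable_finset_sum_measure.mpr fun j _ => ?_
  exact (hf j).smul_measure ENNReal.ofReal_ne_top

lemma mix_integral (hω : ∀ j, 0 < ω j) {f : ℝ → ℝ} (hf : ∀ j, Integrable f (ν j)) :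
    ∫ y, f y ∂((∑ j, ENNReal.ofReal (ω j) • ν j) : Measure ℝ)
      = ∑ j, ω j * ∫ y, f y ∂(ν j) := by
  rw [integral_finset_sum_measure fun j _ => (hf j).smul_measure ENNReal.ofReal_ne_top]
  refine Finset.sum_congr rfl fun j _ => ?_
  rw [integral_smul_measure, ENNReal.toReal_ofReal (hω j).le, smul_eq_mul]

end mix

/-- Explicit CVaR of a Gaussian mixture: with `q = VaR_α(μ)` and component tail
probabilities `αⱼ = 1 - Φ((q - mⱼ)/σⱼ)`,
`CVaR_α(μ) = (1/α) Σⱼ ωⱼ (αⱼ mⱼ + σⱼ φ((q - mⱼ)/σⱼ))`. -/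
theorem cvar_gaussian_mixture (α : ℝ) (hα : α ∈ Set.Ioo (0 : ℝ) 1)
    (N : ℕ) (hN : 1 ≤ N)
    (m : Fin N → ℝ) (σ : Fin N → ℝ) (hσ : ∀ j, 0 < σ j)
    (ω : Fin N → ℝ) (hω : ∀ j, 0 < ω j) (hsum : ∑ j, ω j = 1)
    (μ : Measure ℝ)
    (hμ : μ = ∑ j, ENNReal.ofReal (ω j) •
      gaussianReal (m j) ⟨(σ j) ^ 2, sq_nonneg (σ j)⟩)
    (q : ℝ) (hq : q = VaR μ α)
    (Phi : ℝ → ℝ) (hPhi : ∀ x, Phi x = ((gaussianReal 0 1) (Iic x)).toReal)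
    (phi : ℝ → ℝ)
    (hphi : ∀ x, phi x = Real.exp (-(x ^ 2) / 2) / Real.sqrt (2 * Real.pi))
    (a : Fin N → ℝ) (ha : ∀ j, a j = 1 - Phi ((q - m j) / σ j)) :
    CVaR μ α
      = (1 / α) * ∑ j, ω j * (a j * m j + σ j * phi ((q - m j) / σ j)) := by
  obtain ⟨hα0, hα1⟩ := hα
  set ν : Fin N → Measure ℝ :=
    fun j => gaussianReal (m j) ⟨(σ j) ^ 2, sq_nonneg (σ j)⟩ with hν
  set t : Fin N → ℝ := fun j => (q - m j) / σ j with htdef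
  have hphi' : ∀ j, phi (t j) = stdPdf (t j) := fun j => hphi (t j)
  have ha' : ∀ j, a j = 1 - stdCdf (t j) := fun j => by
    rw [ha j, hPhi]; rfl
  haveI : ∀ j, IsProbabilityMeasure (ν j) := fun j => instIsProbabilityMeasureGaussianReal _ _
  have hprob : IsProbabilityMeasure μ := by
    rw [hμ]; exact mix_prob ω ν hω hsum
  -- no atom at q
  have hatom : μ {q} = 0 := by
    rw [hμ, Measure.finset_sum_apply]
    refine Finset.sum_eq_zero fun j _ => ?_
    rw [Measure.smul_apply]
    have hv : (⟨(σ j)^2, sq_nonneg (σ j)⟩ : ℝ≥0) ≠ 0 := by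
      intro h
      exact pow_ne_zero 2 (hσ j).ne' (congrArg NNReal.toReal h)
    rw [gaussianReal_absolutelyContinuous (m j) hv (measure_singleton q), smul_zero]
  -- cdf at q
  have hcdf : (μ (Iic q)).toReal = 1 - α := by
    rw [hq]; exact cdf_VaR μ ⟨hα0, hα1⟩ (hq ▸ hatom)
  -- tail probability = α
  have htail : (μ (Ioi q)).toReal = α := by
    have h1 : μ (Ioi q) = 1 - μ (Iic q) := by
      rw [← compl_Iic]; exact prob_compl_eq_one_sub measurableSet_Iic
    rw [h1, ENNReal.toReal_sub_of_le prob_le_one ENNReal.one_ne_top, hcdf]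
    norm_num
  -- tail = Σ ω a
  have hA : ∑ j, ω j * a j = α := by
    rw [← htail, hμ, mix_apply ω ν hω]
    exact Finset.sum_congr rfl fun j _ => by rw [ha' j, gaussian_tail (hσ j)]
  -- integral at q
  have hIq : ∫ y, max (y - q) 0 ∂μ
      = ∑ j, ω j * (σ j * stdPdf (t j) + (m j - q) * a j) := by
    rw [hμ, mix_integral ω ν hω fun j => gaussian_integrable_max (hσ j)]
    exact Finset.sum_congr rfl fun j _ => by
      rw [gaussian_integral_max (hσ j), ha' j]
  -- integrability facts
  have hint : ∀ z : ℝ, Integrable (fun y => max (y - z) 0) μ := fun z => by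
    rw [hμ]; exact mix_integrable ω ν fun j => gaussian_integrable_max (hσ j)
  set g : ℝ → ℝ := fun z => z + (1 / α) * ∫ y, max (y - z) 0 ∂μ with hg
  -- the minimum value
  have hgq : g q = (1 / α) * ∑ j, ω j * (a j * m j + σ j * phi (t j)) := by
    rw [hg]
    simp only
    rw [hIq]
    have expand : ∑ j, ω j * (a j * m j + σ j * phi (t j))
        = ∑ j, ω j * (σ j * stdPdf (t j) + (m j - q) * a j) + q * ∑ j, ω j * a j := by
      rw [Finset.mul_sum, ← Finset.sum_add_distrib]
      exact Finset.sum_congr rfl fun j _ => by rw [hphi' j]; ring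
    rw [expand, hA, mul_add]
    field_simp
    ring
  -- g q is a lower bound
  have hlb : ∀ z : ℝ, g q ≤ g z := by
    intro z
    have hkey : ∫ y, max (y - q) 0 ∂μ + (q - z) * α ≤ ∫ y, max (y - z) 0 ∂μ := by
      have hind : Integrable ((Ioi q).indicator (fun _ => q - z)) μ := by
        rw [integrable_indicator_iff measurableSet_Ioi]
        exact integrableOn_const (measure_lt_top μ _).ne
      have hmono : ∀ y : ℝ, max (y - q) 0 + (Ioi q).indicator (fun _ => q - z) y
          ≤ max (y - z) 0 := by
        intro y
        by_cases hy : q < y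
        · rw [indicator_of_mem (mem_Ioi.mpr hy),
            max_eq_left (show (0:ℝ) ≤ y - q by linarith)]
          have := le_max_left (y - z) (0:ℝ)
          linarith
        · rw [indicator_of_notMem (by simpa using hy), add_zero]
          push_neg at hy
          rw [max_eq_right (by linarith)]
          exact le_max_right _ _
      have h2 := integral_mono ((hint q).add hind) (hint z) hmono
      simp only [Pi.add_apply] at h2
      rwa [integral_add (hint q) hind, integral_indicator_const _ measurableSet_Ioi, measureReal_def,
        htail, smul_eq_mul, mul_comm] at h2
    have hstep : (1 / α) * (∫ y, max (y - q) 0 ∂μ + (q - z) * α)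
        ≤ (1 / α) * ∫ y, max (y - z) 0 ∂μ :=
      mul_le_mul_of_nonneg_left hkey (by positivity)
    rw [mul_add] at hstep
    have : (1 / α) * ((q - z) * α) = q - z := by field_simp
    rw [this] at hstep
    simp only [hg]
    linarith
  -- conclude
  rw [CVaR, ← hgq]
  refine le_antisymm (ciInf_le ⟨g q, fun x hx => ?_⟩ q) (le_ciInf hlb)
  obtain ⟨z, rfl⟩ := hx
  exact hlb z
end
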